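/- (Lemma 6, degree-fluctuation event.) Suppose n·p·s² ≥ 128·log n. There exists N such that for all n ≥ N and any two vertices u, v ∈ [n]: P( {a_u − a_v ≤ τ} ∪ {b_v − b_u ≤ τ} ) ≥ 1 − n^{−7/2}, where τ = 2·√(10·n·p·s·(1−s)·log n) + 5·log n. -/

import Mathlib

open scoped Classical
open Finset

namespace SeededGraphMatching

/-- Sample space of the correlated Erdős–Rényi model `𝒢(n,p;s)`: for each unordered pair
`e` of vertices there is a triple `(X_e, S_e, T_e)` of Booleans. -/
abbrev ESpace (n : ℕ) := Sym2 (Fin n) → Bool × Bool × Bool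

/-- Probability weight of a single triple: `X_e ~ Bern(p)`, `S_e ~ Bern(s)`, `T_e ~ Bern(s)`,
all independent. -/
noncomputable def wt (p s : ℝ) (b : Bool × Bool × Bool) : ℝ :=
  (if b.1 then p else 1 - p) * (if b.2.1 then s else 1 - s) * (if b.2.2 then s else 1 - s)

/-- Probability of an elementary outcome (product of independent Bernoullis). -/
noncomputable def prOmega (n : ℕ) (p s : ℝ) (ω : ESpace n) : ℝ :=
  ∏ e : Sym2 (Fin n), wt p s (ω e)

/-- Probability of an event. -/
noncomputable def Pr (n : ℕ) (p s : ℝ) (E : Set (ESpace n)) : ℝ :=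
  ∑ ω : ESpace n, E.indicator (prOmega n p s) ω

/-- `G1` contains the edge `e = {i,j}` (for `i ≠ j`) iff `X_e = 1` and `S_e = 1`. -/
def G1 (n : ℕ) (ω : ESpace n) : SimpleGraph (Fin n) where
  Adj i j := i ≠ j ∧ (ω s(i, j)).1 = true ∧ (ω s(i, j)).2.1 = true
  symm := by
    constructor
    intro i j h
    refine ⟨h.1.symm, ?_, ?_⟩
    · rw [Sym2.eq_swap]; exact h.2.1
    · rw [Sym2.eq_swap]; exact h.2.2
  loopless := ⟨fun i h => h.1 rfl⟩

/-- `G2` contains the edge `e = {i,j}` (for `i ≠ j`) iff `X_e = 1` and `T_e = 1`. -/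
def G2 (n : ℕ) (ω : ESpace n) : SimpleGraph (Fin n) where
  Adj i j := i ≠ j ∧ (ω s(i, j)).1 = true ∧ (ω s(i, j)).2.2 = true
  symm := by
    constructor
    intro i j h
    refine ⟨h.1.symm, ?_, ?_⟩
    · rw [Sym2.eq_swap]; exact h.2.1
    · rw [Sym2.eq_swap]; exact h.2.2
  loopless := ⟨fun i h => h.1 rfl⟩

/-- Number of fixed points of the seed permutation `π`. -/
def fixedCount (n : ℕ) (π : Equiv.Perm (Fin n)) : ℕ :=
  (univ.filter fun i => π i = i).card

/-- The (random) neighborhood of `u` in `G1`, as a finite set. -/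
noncomputable def nbr1 (n : ℕ) (ω : ESpace n) (u : Fin n) : Finset (Fin n) :=
  univ.filter fun i => (G1 n ω).Adj u i

/-- The (random) neighborhood of `u` in `G2`, as a finite set. -/
noncomputable def nbr2 (n : ℕ) (ω : ESpace n) (u : Fin n) : Finset (Fin n) :=
  univ.filter fun i => (G2 n ω).Adj u i

/-! ### Auxiliary definitions for the proof -/

noncomputable def Xr (b : Bool × Bool × Bool) : ℝ := if b.1 then 1 else 0
noncomputable def Sr (b : Bool × Bool × Bool) : ℝ := if b.2.1 then 1 else 0
noncomputable def Tr (b : Bool × Bool × Bool) : ℝ := if b.2.2 then 1 else 0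
noncomputable def gf (b : Bool × Bool × Bool) : ℝ := Xr b * (Sr b - Tr b)
noncomputable def cu {n : ℕ} (u : Fin n) (e : Sym2 (Fin n)) : ℝ :=
  if u ∈ e ∧ ¬ e.IsDiag then 1 else 0

lemma wt_nonneg {p s : ℝ} (hp0 : 0 < p) (hp1 : p < 1) (hs0 : 0 < s) (hs1 : s ≤ 1)
    (b : Bool × Bool × Bool) : 0 ≤ wt p s b := by
  have h1p : 0 ≤ 1 - p := by linarith
  have h1s : 0 ≤ 1 - s := by linarith
  unfold wt
  split_ifs <;>
    exact mul_nonneg (mul_nonneg (by linarith) (by linarith)) (by linarith)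

lemma sum_wt (p s : ℝ) : ∑ b : Bool × Bool × Bool, wt p s b = 1 := by
  simp [wt, Fintype.sum_prod_type]; ring

lemma sum_eval (p s y : ℝ) :
    ∑ b : Bool × Bool × Bool, wt p s b * Real.exp (y * gf b)
      = 1 - 2*p*s*(1-s) + p*s*(1-s)*(Real.exp y + Real.exp (-y)) := by
  simp [wt, gf, Xr, Sr, Tr, Fintype.sum_prod_type]
  ring_nf

lemma edge_mgf (p s lam c : ℝ) (hp : 0 < p) (hs : 0 < s) (hs1 : s ≤ 1)
    (hl0 : 0 ≤ lam) (hl1 : lam ≤ 1) (hc : c = 0 ∨ c = 1 ∨ c = -1) :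
    ∑ b : Bool × Bool × Bool, wt p s b * Real.exp (lam * (c * gf b))
      ≤ Real.exp ((3/2) * (p * s * (1-s)) * lam^2 * c^2) := by
  have hq : 0 ≤ p * s * (1-s) := mul_nonneg (mul_nonneg hp.le hs.le) (by linarith)
  have hcb : Real.exp lam + Real.exp (-lam) - 2 ≤ (3/2) * lam ^ 2 := by
    have hb := Real.exp_bound (x := lam) (by rwa [abs_of_nonneg hl0]) (n := 2) (by norm_num)
    have hb' := Real.exp_bound (x := -lam) (by rwa [abs_neg, abs_of_nonneg hl0]) (n := 2) (by norm_num)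
    rw [abs_le] at hb hb'
    simp [Finset.sum_range_succ] at hb hb'
    nlinarith [hb.1, hb.2, hb'.1, hb'.2]
  rcases hc with rfl | rfl | rfl
  · have h0 : ∀ b : Bool × Bool × Bool, wt p s b * Real.exp (lam * ((0:ℝ) * gf b)) = wt p s b := by
      intro b; simp
    rw [Finset.sum_congr rfl fun b _ => h0 b, sum_wt]
    simp [Real.exp_nonneg]
  · calc ∑ b : Bool × Bool × Bool, wt p s b * Real.exp (lam * ((1:ℝ) * gf b))
        = 1 - 2*p*s*(1-s) + p*s*(1-s)*(Real.exp lam + Real.exp (-lam)) := by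
          rw [← sum_eval p s lam]
          exact Finset.sum_congr rfl fun b _ => by rw [show lam * ((1:ℝ) * gf b) = lam * gf b by ring]
      _ ≤ 1 + (3/2) * (p * s * (1-s)) * lam^2 * 1 := by nlinarith
      _ ≤ Real.exp ((3/2) * (p * s * (1-s)) * lam^2 * ((1:ℝ))^2) := by
          have := Real.add_one_le_exp ((3/2) * (p * s * (1-s)) * lam^2 * 1)
          norm_num at this ⊢; linarith
  · calc ∑ b : Bool × Bool × Bool, wt p s b * Real.exp (lam * ((-1:ℝ) * gf b))
        = 1 - 2*p*s*(1-s) + p*s*(1-s)*(Real.exp (-lam) + Real.exp lam) := by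
          have h1 : ∑ b : Bool × Bool × Bool, wt p s b * Real.exp (lam * ((-1:ℝ) * gf b))
              = ∑ b : Bool × Bool × Bool, wt p s b * Real.exp ((-lam) * gf b) :=
            Finset.sum_congr rfl fun b _ => by rw [show lam * ((-1:ℝ) * gf b) = (-lam) * gf b by ring]
          rw [h1, sum_eval, neg_neg]
      _ ≤ 1 + (3/2) * (p * s * (1-s)) * lam^2 * 1 := by nlinarith
      _ ≤ Real.exp ((3/2) * (p * s * (1-s)) * lam^2 * ((-1:ℝ))^2) := by
          have := Real.add_one_le_exp ((3/2) * (p * s * (1-s)) * lam^2 * 1)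
          norm_num at this ⊢; linarith

lemma sum_edges_eq {n : ℕ} (u : Fin n) (F : Sym2 (Fin n) → ℝ) :
    ∑ e : Sym2 (Fin n), cu u e * F e = ∑ w ∈ univ.filter (fun w => w ≠ u), F s(u, w) := by
  rw [← Finset.sum_filter_add_sum_filter_not univ (fun e : Sym2 (Fin n) => u ∈ e ∧ ¬ e.IsDiag)]
  have h2 : ∑ e ∈ univ.filter (fun e : Sym2 (Fin n) => ¬(u ∈ e ∧ ¬ e.IsDiag)), cu u e * F e = 0 := by
    apply Finset.sum_eq_zero
    intro e he
    simp only [mem_filter] at he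
    simp [cu, he.2]
  rw [h2, add_zero]
  have h1 : ∀ e ∈ univ.filter (fun e : Sym2 (Fin n) => u ∈ e ∧ ¬ e.IsDiag), cu u e * F e = F e := by
    intro e he; simp only [mem_filter] at he; simp [cu, he.2]
  rw [Finset.sum_congr rfl h1]
  have himg : ∑ w ∈ univ.filter (fun w => w ≠ u), F s(u, w)
      = ∑ e ∈ (univ.filter (fun w => w ≠ u)).image (fun w => s(u, w)), F e :=
    (Finset.sum_image (by intro a _ b _ h; exact (Sym2.congr_right).1 h)).symm
  rw [himg]
  congr 1
  ext e
  simp only [mem_image, mem_filter, mem_univ, true_and]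
  constructor
  · rintro ⟨hmem, hdiag⟩
    obtain ⟨w, rfl⟩ := Sym2.mem_iff_exists.1 hmem
    exact ⟨w, by rintro rfl; exact hdiag (by simp [Sym2.mk_isDiag_iff]), rfl⟩
  · rintro ⟨w, hw, rfl⟩
    exact ⟨Sym2.mem_mk_left u w, by simp [Sym2.mk_isDiag_iff]; exact fun h => hw h.symm⟩

lemma card_nbr1 {n : ℕ} (ω : ESpace n) (u : Fin n) :
    ((nbr1 n ω u).card : ℝ) = ∑ e : Sym2 (Fin n), cu u e * (Xr (ω e) * Sr (ω e)) := by
  rw [sum_edges_eq u (fun e => Xr (ω e) * Sr (ω e))]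
  unfold nbr1
  rw [Finset.card_filter]
  push_cast
  rw [← Finset.sum_filter_of_ne (p := fun w => w ≠ u)
    (f := fun w => if (G1 n ω).Adj u w then (1:ℝ) else 0)
    (by intro w _ hne; intro heq; exact hne (by subst heq; simp [G1]))]
  refine Finset.sum_congr rfl fun w hw => ?_
  simp only [mem_filter] at hw
  have huw : u ≠ w := fun h => hw.2 h.symm
  by_cases h1 : (ω s(u, w)).1 = true <;> by_cases h2 : (ω s(u, w)).2.1 = true <;>
    simp [G1, Xr, Sr, huw, h1, h2]

lemma card_nbr2 {n : ℕ} (ω : ESpace n) (u : Fin n) :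
    ((nbr2 n ω u).card : ℝ) = ∑ e : Sym2 (Fin n), cu u e * (Xr (ω e) * Tr (ω e)) := by
  rw [sum_edges_eq u (fun e => Xr (ω e) * Tr (ω e))]
  unfold nbr2
  rw [Finset.card_filter]
  push_cast
  rw [← Finset.sum_filter_of_ne (p := fun w => w ≠ u)
    (f := fun w => if (G2 n ω).Adj u w then (1:ℝ) else 0)
    (by intro w _ hne; intro heq; exact hne (by subst heq; simp [G2]))]
  refine Finset.sum_congr rfl fun w hw => ?_
  simp only [mem_filter] at hw
  have huw : u ≠ w := fun h => hw.2 h.symm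
  by_cases h1 : (ω s(u, w)).1 = true <;> by_cases h2 : (ω s(u, w)).2.2 = true <;>
    simp [G2, Xr, Tr, huw, h1, h2]

lemma sum_cu_le {n : ℕ} (u : Fin n) : ∑ e : Sym2 (Fin n), cu u e ≤ (n : ℝ) := by
  have h := sum_edges_eq u (fun _ => (1:ℝ))
  simp only [mul_one] at h
  rw [h, Finset.sum_const, nsmul_eq_mul, mul_one]
  have hcard : (univ.filter (fun w : Fin n => w ≠ u)).card ≤ n := by
    simpa using Finset.card_filter_le (univ : Finset (Fin n)) (fun w => w ≠ u)
  exact_mod_cast hcard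

lemma sum_coef_sq_le {n : ℕ} (u v : Fin n) :
    ∑ e : Sym2 (Fin n), (cu u e - cu v e)^2 ≤ 2 * (n : ℝ) := by
  have h1 : ∀ e : Sym2 (Fin n), (cu u e - cu v e)^2 ≤ cu u e + cu v e := by
    intro e; unfold cu; split_ifs <;> norm_num
  calc ∑ e : Sym2 (Fin n), (cu u e - cu v e)^2
      ≤ ∑ e : Sym2 (Fin n), (cu u e + cu v e) := Finset.sum_le_sum fun e _ => h1 e
    _ = (∑ e : Sym2 (Fin n), cu u e) + ∑ e : Sym2 (Fin n), cu v e := Finset.sum_add_distrib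
    _ ≤ (n : ℝ) + (n : ℝ) := add_le_add (sum_cu_le u) (sum_cu_le v)
    _ = 2 * (n : ℝ) := by ring

lemma coef_cases {n : ℕ} (u v : Fin n) (e : Sym2 (Fin n)) :
    cu u e - cu v e = 0 ∨ cu u e - cu v e = 1 ∨ cu u e - cu v e = -1 := by
  unfold cu; split_ifs <;> norm_num

lemma choose_lam (A L : ℝ) (hA : 0 ≤ A) (hL : 0 < L) :
    ∃ lam : ℝ, 0 ≤ lam ∧ lam ≤ 1 ∧
      3 * A * lam^2 - lam * (2 * (2 * Real.sqrt (10 * A * L) + 5 * L)) ≤ -(7/2) * L := by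
  by_cases hc : A ≤ L
  · refine ⟨1, zero_le_one, le_refl 1, ?_⟩
    have hs := Real.sqrt_nonneg (10 * A * L)
    nlinarith
  · push_neg at hc
    have hA0 : 0 < A := lt_trans hL hc
    refine ⟨Real.sqrt (L / A), Real.sqrt_nonneg _, ?_, ?_⟩
    · rw [show (1:ℝ) = Real.sqrt 1 from Real.sqrt_one.symm]
      apply Real.sqrt_le_sqrt
      rw [div_le_one hA0]; linarith
    · have hlam2 : Real.sqrt (L / A) ^ 2 = L / A := Real.sq_sqrt (div_nonneg hL.le hA0.le)
      have hkey : Real.sqrt (L / A) * Real.sqrt (10 * A * L) = Real.sqrt 10 * L := by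
        rw [← Real.sqrt_mul (div_nonneg hL.le hA0.le)]
        have : L / A * (10 * A * L) = 10 * L^2 := by field_simp
        rw [this, Real.sqrt_mul (by norm_num : (0:ℝ) ≤ 10), Real.sqrt_sq hL.le]
      have h10 : (3.16 : ℝ) ≤ Real.sqrt 10 := by
        have hsq : Real.sqrt 10 ^ 2 = 10 := Real.sq_sqrt (by norm_num)
        nlinarith [Real.sqrt_nonneg 10]
      have hA2 : 3 * A * (Real.sqrt (L / A))^2 = 3 * L := by
        rw [hlam2]; field_simp
      have hlamnn : 0 ≤ Real.sqrt (L / A) := Real.sqrt_nonneg _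
      nlinarith [hkey, h10, hA2]


/-- Lemma 6: degree-fluctuation event. -/
theorem degree_fluctuation :
    ∃ N : ℕ, ∀ n : ℕ, N ≤ n →
      ∀ p s : ℝ, p ∈ Set.Ioo (0 : ℝ) 1 → s ∈ Set.Ioc (0 : ℝ) 1 →
        (n : ℝ) * p * s ^ 2 ≥ 128 * Real.log n →
        ∀ u v : Fin n,
          Pr n p s {ω |
              ((nbr1 n ω u).card : ℝ) - ((nbr1 n ω v).card : ℝ)
                  ≤ 2 * Real.sqrt (10 * (n : ℝ) * p * s * (1 - s) * Real.log n)
                    + 5 * Real.log n ∨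
              ((nbr2 n ω v).card : ℝ) - ((nbr2 n ω u).card : ℝ)
                  ≤ 2 * Real.sqrt (10 * (n : ℝ) * p * s * (1 - s) * Real.log n)
                    + 5 * Real.log n}
            ≥ 1 - (n : ℝ) ^ (-(7 / 2 : ℝ)) := by
  refine ⟨2, fun n hn p s hp hs _ u v => ?_⟩
  obtain ⟨hp0, hp1⟩ := hp
  obtain ⟨hs0, hs1⟩ := hs
  set L : ℝ := Real.log n with hLdef
  have hn1 : (1 : ℝ) < n := by exact_mod_cast lt_of_lt_of_le one_lt_two hn
  have hL0 : 0 < L := Real.log_pos hn1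
  set q : ℝ := p * s * (1 - s) with hqdef
  have hq0 : 0 ≤ q := mul_nonneg (mul_nonneg hp0.le hs0.le) (by linarith)
  set τ : ℝ := 2 * Real.sqrt (10 * (n : ℝ) * p * s * (1 - s) * L) + 5 * L with hτdef
  -- rewrite the sqrt argument
  have hsqarg : 10 * (n : ℝ) * p * s * (1 - s) * L = 10 * ((n : ℝ) * q) * L := by
    rw [hqdef]; ring
  obtain ⟨lam, hl0, hl1, hexp⟩ := choose_lam ((n : ℝ) * q) L
    (mul_nonneg (Nat.cast_nonneg n) hq0) hL0
  have hexpτ : 3 * ((n:ℝ) * q) * lam^2 - lam * (2 * τ) ≤ -(7/2) * L := by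
    rw [hτdef, hsqarg]; convert hexp using 3 <;> ring
  -- basic nonnegativity
  have hwt0 : ∀ b, 0 ≤ wt p s b := wt_nonneg hp0 hp1 hs0 hs1
  have hpr0 : ∀ ω : ESpace n, 0 ≤ prOmega n p s ω :=
    fun ω => Finset.prod_nonneg fun e _ => hwt0 (ω e)
  have hsum1 : ∑ ω : ESpace n, prOmega n p s ω = 1 := by
    unfold prOmega
    rw [← Fintype.prod_sum (f := fun (_ : Sym2 (Fin n)) (b : Bool × Bool × Bool) => wt p s b)]
    simp [sum_wt]
  set E : Set (ESpace n) := {ω |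
      ((nbr1 n ω u).card : ℝ) - ((nbr1 n ω v).card : ℝ) ≤ τ ∨
      ((nbr2 n ω v).card : ℝ) - ((nbr2 n ω u).card : ℝ) ≤ τ} with hEdef
  show Pr n p s E ≥ 1 - (n : ℝ) ^ (-(7 / 2 : ℝ))
  -- complement
  have hsplit : Pr n p s E = 1 - Pr n p s Eᶜ := by
    unfold Pr
    rw [eq_sub_iff_add_eq, ← Finset.sum_add_distrib, ← hsum1]
    refine Finset.sum_congr rfl fun ω _ => ?_
    by_cases h : ω ∈ E
    · rw [Set.indicator_of_mem h, Set.indicator_of_notMem (by simp [h]), add_zero]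
    · rw [Set.indicator_of_notMem h, Set.indicator_of_mem (by simp [h]), zero_add]
  rw [hsplit]
  have hfinal : Pr n p s Eᶜ ≤ (n : ℝ) ^ (-(7 / 2 : ℝ)) := by
    set coef : Sym2 (Fin n) → ℝ := fun e => cu u e - cu v e with hcoefdef
    set D : ESpace n → ℝ := fun ω => ∑ e : Sym2 (Fin n), coef e * gf (ω e) with hDdef
    have hD_eq : ∀ ω : ESpace n,
        D ω = (((nbr1 n ω u).card : ℝ) - ((nbr1 n ω v).card : ℝ))
            + (((nbr2 n ω v).card : ℝ) - ((nbr2 n ω u).card : ℝ)) := by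
      intro ω
      rw [card_nbr1 ω u, card_nbr1 ω v, card_nbr2 ω v, card_nbr2 ω u]
      rw [hDdef]
      simp only [← Finset.sum_sub_distrib, ← Finset.sum_add_distrib]
      exact Finset.sum_congr rfl fun e _ => by rw [hcoefdef]; unfold gf; ring
    -- pointwise Markov bound
    have hpoint : ∀ ω : ESpace n,
        Eᶜ.indicator (prOmega n p s) ω
          ≤ prOmega n p s ω * Real.exp (lam * (D ω - 2 * τ)) := by
      intro ω
      by_cases h : ω ∈ Eᶜ
      · rw [Set.indicator_of_mem h]
        have hDge : 2 * τ ≤ D ω := by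
          have h' : ¬(((nbr1 n ω u).card : ℝ) - ((nbr1 n ω v).card : ℝ) ≤ τ ∨
              ((nbr2 n ω v).card : ℝ) - ((nbr2 n ω u).card : ℝ) ≤ τ) := h
          push_neg at h'
          rw [hD_eq ω]; linarith [h'.1, h'.2]
        have : (1:ℝ) ≤ Real.exp (lam * (D ω - 2 * τ)) := by
          rw [show (1:ℝ) = Real.exp 0 from (Real.exp_zero).symm]
          exact Real.exp_le_exp.2 (mul_nonneg hl0 (by linarith))
        nlinarith [hpr0 ω]
      · rw [Set.indicator_of_notMem h]
        exact mul_nonneg (hpr0 ω) (Real.exp_nonneg _)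
    -- factorization
    have hfact : ∑ ω : ESpace n, prOmega n p s ω * Real.exp (lam * D ω)
        = ∏ e : Sym2 (Fin n), ∑ b : Bool × Bool × Bool,
            wt p s b * Real.exp (lam * (coef e * gf b)) := by
      have h1 : ∀ ω : ESpace n, prOmega n p s ω * Real.exp (lam * D ω)
          = ∏ e : Sym2 (Fin n), (wt p s (ω e) * Real.exp (lam * (coef e * gf (ω e)))) := by
        intro ω
        rw [Finset.prod_mul_distrib]
        congr 1
        rw [← Real.exp_sum]
        congr 1
        simp only [hDdef]
        rw [Finset.mul_sum]
      rw [Finset.sum_congr rfl fun ω _ => h1 ω]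
      exact (Fintype.prod_sum (fun (e : Sym2 (Fin n)) (b : Bool × Bool × Bool) =>
        wt p s b * Real.exp (lam * (coef e * gf b)))).symm
    have hedge : ∀ e : Sym2 (Fin n),
        ∑ b : Bool × Bool × Bool, wt p s b * Real.exp (lam * (coef e * gf b))
          ≤ Real.exp ((3/2) * q * lam^2 * (coef e)^2) := by
      intro e
      have := edge_mgf p s lam (coef e) hp0 hs0 hs1 hl0 hl1 (coef_cases u v e)
      rwa [hqdef]
    have hedge0 : ∀ e : Sym2 (Fin n),
        0 ≤ ∑ b : Bool × Bool × Bool, wt p s b * Real.exp (lam * (coef e * gf b)) :=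
      fun e => Finset.sum_nonneg fun b _ =>
        mul_nonneg (hwt0 b) (Real.exp_nonneg _)
    have hprod : ∏ e : Sym2 (Fin n), ∑ b : Bool × Bool × Bool,
          wt p s b * Real.exp (lam * (coef e * gf b))
        ≤ Real.exp (3 * ((n:ℝ) * q) * lam^2) := by
      calc ∏ e : Sym2 (Fin n), ∑ b : Bool × Bool × Bool,
            wt p s b * Real.exp (lam * (coef e * gf b))
          ≤ ∏ e : Sym2 (Fin n), Real.exp ((3/2) * q * lam^2 * (coef e)^2) :=
            Finset.prod_le_prod (fun e _ => hedge0 e) (fun e _ => hedge e)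
        _ = Real.exp (∑ e : Sym2 (Fin n), (3/2) * q * lam^2 * (coef e)^2) := by
            rw [Real.exp_sum]
        _ ≤ Real.exp (3 * ((n:ℝ) * q) * lam^2) := by
            apply Real.exp_le_exp.2
            rw [← Finset.mul_sum]
            have hc2 : ∑ e : Sym2 (Fin n), (coef e)^2 ≤ 2 * (n:ℝ) := sum_coef_sq_le u v
            have hnn : 0 ≤ (3/2) * q * lam^2 := by positivity
            calc (3/2) * q * lam^2 * ∑ e : Sym2 (Fin n), (coef e)^2
                ≤ (3/2) * q * lam^2 * (2 * (n:ℝ)) := by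
                  apply mul_le_mul_of_nonneg_left hc2 hnn
              _ = 3 * ((n:ℝ) * q) * lam^2 := by ring
    calc Pr n p s Eᶜ
        ≤ ∑ ω : ESpace n, prOmega n p s ω * Real.exp (lam * (D ω - 2 * τ)) :=
          Finset.sum_le_sum fun ω _ => hpoint ω
      _ = Real.exp (-(lam * (2 * τ))) * ∑ ω : ESpace n, prOmega n p s ω * Real.exp (lam * D ω) := by
          rw [Finset.mul_sum]
          refine Finset.sum_congr rfl fun ω _ => ?_
          rw [show lam * (D ω - 2 * τ) = lam * D ω + -(lam * (2 * τ)) by ring, Real.exp_add]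
          ring
      _ ≤ Real.exp (-(lam * (2 * τ))) * Real.exp (3 * ((n:ℝ) * q) * lam^2) := by
          rw [hfact]
          exact mul_le_mul_of_nonneg_left hprod (Real.exp_nonneg _)
      _ = Real.exp (3 * ((n:ℝ) * q) * lam^2 - lam * (2 * τ)) := by
          rw [← Real.exp_add]; ring_nf
      _ ≤ Real.exp (-(7/2) * L) := Real.exp_le_exp.2 hexpτ
      _ = (n : ℝ) ^ (-(7 / 2 : ℝ)) := by
          rw [Real.rpow_def_of_pos (by linarith : (0:ℝ) < n)]
          congr 1
          rw [hLdef]; ring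
  linarith

end SeededGraphMatching
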